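/- Let f ∈ ℂ[z] be a polynomial of degree d > 1. Then the sequence of functions z ↦ d^{-n}·log max{1, |f^n(z)|} converges locally uniformly on ℂ to a continuous function g_f : ℂ → ℝ satisfying g_f ≥ 0 on ℂ, g_f(f(z)) = d·g_f(z) for all z ∈ ℂ, and {z ∈ ℂ : g_f(z) = 0} = K(f), where K(f) := {z ∈ ℂ : sup_n |f^n(z)| < ∞} is the filled-in Julia set of f. -/

import Mathlib

open Polynomial MeasureTheory Filter


noncomputable def phiGF (w : ℂ) : ℝ := Real.log (max 1 (‖w‖))

lemma phiGF_nonneg (w : ℂ) : 0 ≤ phiGF w := Real.log_nonneg (le_max_left _ _)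

lemma phiGF_cont : Continuous phiGF :=
  (continuous_const.max continuous_norm).log (fun w => by positivity)

lemma keyGF (f : Polynomial ℂ) (d : ℕ) (hd : 1 < d) (hdeg : f.natDegree = d) :
    ∃ C : ℝ, 0 ≤ C ∧ ∀ w : ℂ,
      (d : ℝ) * phiGF w - C ≤ phiGF (f.eval w) ∧
      phiGF (f.eval w) ≤ (d : ℝ) * phiGF w + C := by
  have hfne : f ≠ 0 := by
    intro h; rw [h] at hdeg; simp at hdeg; omega
  have hane : f.coeff d ≠ 0 := by
    rw [← hdeg]; exact mt Polynomial.leadingCoeff_eq_zero.mp hfne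
  set a : ℝ := ‖f.coeff d‖ with ha
  have hapos : 0 < a := norm_pos_iff.mpr hane
  set B : ℝ := ∑ i ∈ Finset.range d, ‖f.coeff i‖ with hB
  have hB0 : 0 ≤ B := Finset.sum_nonneg fun i _ => by positivity
  set A : ℝ := ∑ i ∈ Finset.range (d + 1), ‖f.coeff i‖ with hA
  have hAeq : A = B + a := by rw [hA, Finset.sum_range_succ, hB]
  set A' : ℝ := max 1 A with hA'
  have hA'1 : (1:ℝ) ≤ A' := le_max_left _ _
  set R : ℝ := max 1 (2 * B / a) with hR
  have hR1 : (1:ℝ) ≤ R := le_max_left _ _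
  -- global upper bound on |f.eval w|
  have hub : ∀ w : ℂ, ‖f.eval w‖ ≤ A * (max 1 (‖w‖)) ^ d := by
    intro w
    set M := max 1 (‖w‖) with hM
    have hM1 : (1:ℝ) ≤ M := le_max_left _ _
    rw [Polynomial.eval_eq_sum_range, hdeg]
    calc ‖∑ i ∈ Finset.range (d+1), f.coeff i * w ^ i‖
        ≤ ∑ i ∈ Finset.range (d+1), ‖f.coeff i * w ^ i‖ :=
          norm_sum_le _ _
      _ ≤ ∑ i ∈ Finset.range (d+1), ‖f.coeff i‖ * M ^ d := by
          apply Finset.sum_le_sum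
          intro i hi
          rw [norm_mul, norm_pow]
          have h1 : ‖w‖ ^ i ≤ M ^ i :=
            pow_le_pow_left₀ (norm_nonneg w) (le_max_right _ _) i
          have h2 : M ^ i ≤ M ^ d :=
            pow_le_pow_right₀ hM1 (Nat.lt_succ_iff.mp (Finset.mem_range.mp hi))
          have := h1.trans h2
          exact mul_le_mul_of_nonneg_left this (by positivity)
      _ = A * M ^ d := by rw [← Finset.sum_mul]
  -- lower bound for |w| ≥ 1
  have hlb : ∀ w : ℂ, 1 ≤ ‖w‖ →
      a * ‖w‖ ^ d - B * ‖w‖ ^ (d-1) ≤ ‖f.eval w‖ := by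
    intro w hw
    rw [Polynomial.eval_eq_sum_range, hdeg, Finset.sum_range_succ]
    set s := ∑ i ∈ Finset.range d, f.coeff i * w ^ i with hs
    have h1 : ‖s‖ ≤ B * ‖w‖ ^ (d-1) := by
      rw [hB, Finset.sum_mul]
      refine (norm_sum_le _ _).trans (Finset.sum_le_sum fun i hi => ?_)
      rw [norm_mul, norm_pow]
      refine mul_le_mul_of_nonneg_left ?_ (by positivity)
      exact pow_le_pow_right₀ hw (by have := Finset.mem_range.mp hi; omega)
    have h2 : a * ‖w‖ ^ d ≤ ‖s + f.coeff d * w ^ d‖ + ‖s‖ := by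
      have : ‖f.coeff d * w ^ d‖ ≤ ‖s + f.coeff d * w ^ d‖ + ‖s‖ := by
        calc ‖f.coeff d * w ^ d‖
            = ‖(s + f.coeff d * w ^ d) + (-s)‖ := by congr 1; ring
          _ ≤ ‖s + f.coeff d * w ^ d‖ + ‖-s‖ := norm_add_le _ _
          _ = ‖s + f.coeff d * w ^ d‖ + ‖s‖ := by rw [norm_neg]
      rwa [norm_mul, norm_pow] at this
    linarith
  refine ⟨max (Real.log A') (max (Real.log 2 - Real.log a) ((d:ℝ) * Real.log R)),
    le_trans (Real.log_nonneg hA'1) (le_max_left _ _), fun w => ?_⟩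
  set C := max (Real.log A') (max (Real.log 2 - Real.log a) ((d:ℝ) * Real.log R)) with hC
  constructor
  · -- lower bound
    rcases le_total (‖w‖) R with hcase | hcase
    · -- small w : d * phi w ≤ d * log R ≤ C, and phi(f w) ≥ 0
      have h1 : phiGF w ≤ Real.log R := by
        apply Real.log_le_log (by positivity)
        exact max_le hR1 hcase
      have h2 : (d:ℝ) * phiGF w ≤ (d:ℝ) * Real.log R :=
        mul_le_mul_of_nonneg_left h1 (by positivity)
      have h3 : (d:ℝ) * Real.log R ≤ C := le_trans (le_max_right _ _) (le_max_right _ _)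
      have := phiGF_nonneg (f.eval w)
      linarith
    · -- large w
      have hw1 : 1 ≤ ‖w‖ := le_trans hR1 hcase
      have hwpos : 0 < ‖w‖ := by linarith
      have hBle : B * ‖w‖ ^ (d-1) ≤ (a/2) * ‖w‖ ^ d := by
        have hdd : d = (d-1) + 1 := by omega
        have hpow : ‖w‖ ^ d = ‖w‖ ^ (d-1) * ‖w‖ := by
          conv_lhs => rw [hdd]
          rw [pow_succ]
        have hwR : 2 * B / a ≤ ‖w‖ := le_trans (le_max_right _ _) hcase
        have : B ≤ (a/2) * ‖w‖ := by
          have h1 := mul_le_mul_of_nonneg_right hwR hapos.le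
          have h2 : (2 * B / a) * a = 2 * B := div_mul_cancel₀ _ (ne_of_gt hapos)
          rw [h2] at h1
          linarith
        calc B * ‖w‖ ^ (d-1) ≤ ((a/2) * ‖w‖) * ‖w‖ ^ (d-1) :=
              mul_le_mul_of_nonneg_right this (by positivity)
          _ = (a/2) * ‖w‖ ^ d := by rw [hpow]; ring
      have hfw : (a/2) * ‖w‖ ^ d ≤ ‖f.eval w‖ := by
        have := hlb w hw1
        linarith
      have hphiw : phiGF w = Real.log (‖w‖) := by
        unfold phiGF; rw [max_eq_right hw1]
      have h1 : Real.log ((a/2) * ‖w‖ ^ d) ≤ phiGF (f.eval w) := by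
        apply Real.log_le_log (by positivity)
        exact le_trans hfw (le_max_right _ _)
      have h2 : Real.log ((a/2) * ‖w‖ ^ d)
          = Real.log a - Real.log 2 + (d:ℝ) * Real.log (‖w‖) := by
        rw [Real.log_mul (by positivity) (by positivity), Real.log_pow,
          Real.log_div (ne_of_gt hapos) (by norm_num)]
      have h3 : Real.log 2 - Real.log a ≤ C := le_trans (le_max_left _ _) (le_max_right _ _)
      rw [hphiw]
      linarith [h1, h2.symm.le]
  · -- upper bound
    set M := max 1 (‖w‖) with hM
    have hM1 : (1:ℝ) ≤ M := le_max_left _ _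
    have h1 : max 1 (‖f.eval w‖) ≤ A' * M ^ d := by
      apply max_le
      · calc (1:ℝ) = 1 * 1 := (one_mul 1).symm
          _ ≤ A' * M ^ d := by
            apply mul_le_mul hA'1 (one_le_pow₀ hM1) (by norm_num) (by linarith)
      · exact le_trans (hub w) (mul_le_mul_of_nonneg_right (le_max_right _ _) (by positivity))
    have h2 : phiGF (f.eval w) ≤ Real.log (A' * M ^ d) :=
      Real.log_le_log (by positivity) h1
    have h3 : Real.log (A' * M ^ d) = Real.log A' + (d:ℝ) * Real.log M := by
      rw [Real.log_mul (by positivity) (by positivity), Real.log_pow]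
    have h4 : Real.log A' ≤ C := le_max_left _ _
    rw [h3] at h2
    have hMp : Real.log M = phiGF w := rfl
    rw [← hMp]
    linarith [h2]

/-- The `n`-th iterate of a polynomial `f` (as a polynomial). -/
noncomputable def polyIter (f : Polynomial ℂ) : ℕ → Polynomial ℂ
  | 0 => Polynomial.X
  | n + 1 => f.comp (polyIter f n)

theorem stmt15 (f : Polynomial ℂ) (d : ℕ) (hd : 1 < d) (hdeg : f.natDegree = d) :
    ∃ g : ℂ → ℝ,
      TendstoLocallyUniformly
        (fun (n : ℕ) (z : ℂ) =>
          Real.log (max 1 (‖(polyIter f n).eval z‖)) / (d : ℝ) ^ n)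
        g atTop ∧
      Continuous g ∧
      (∀ z : ℂ, 0 ≤ g z) ∧
      (∀ z : ℂ, g (f.eval z) = d * g z) ∧
      {z : ℂ | g z = 0} = {z : ℂ | ∃ M : ℝ, ∀ n : ℕ, ‖(polyIter f n).eval z‖ ≤ M} := by
  classical
  obtain ⟨C, hC0, hC⟩ := keyGF f d hd hdeg
  have hd1 : (1:ℝ) < (d:ℝ) := by exact_mod_cast hd
  have hdpos : (0:ℝ) < (d:ℝ) := by linarith
  have hdne : (d:ℝ) ≠ 0 := ne_of_gt hdpos
  set r : ℝ := 1 / (d:ℝ) with hr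
  have hr0 : 0 < r := by positivity
  have hr1 : r < 1 := by rw [hr, div_lt_one hdpos]; linarith
  set F : ℕ → ℂ → ℝ := fun n z =>
    Real.log (max 1 (‖(polyIter f n).eval z‖)) / (d : ℝ) ^ n with hFdef
  have hFphi : ∀ n z, F n z = phiGF ((polyIter f n).eval z) / (d:ℝ)^n := fun n z => rfl
  have hit : ∀ n z, (polyIter f (n+1)).eval z = f.eval ((polyIter f n).eval z) := by
    intro n z; simp [polyIter, Polynomial.eval_comp]
  have hitc : ∀ n z, (polyIter f n).eval (f.eval z) = f.eval ((polyIter f n).eval z) := by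
    intro n
    induction n with
    | zero => intro z; simp [polyIter]
    | succ n ih => intro z; rw [hit, hit, ih]
  -- increment bound
  have hstep : ∀ n z, dist (F n z) (F (n+1) z) ≤ C * r ^ (n+1) := by
    intro n z
    set w := (polyIter f n).eval z with hw
    obtain ⟨hlo, hhi⟩ := hC w
    rw [Real.dist_eq, hFphi, hFphi, hit]
    have e : phiGF w / (d:ℝ)^n - phiGF (f.eval w) / (d:ℝ)^(n+1)
        = ((d:ℝ) * phiGF w - phiGF (f.eval w)) / (d:ℝ)^(n+1) := by
      rw [pow_succ]; field_simp
    have e2 : C * r ^ (n+1) = C / (d:ℝ)^(n+1) := by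
      rw [hr, div_pow, one_pow, mul_one_div]
    rw [e, e2, abs_div, abs_of_pos (pow_pos hdpos (n+1))]
    gcongr
    rw [abs_le]; constructor <;> linarith
  set D : ℝ := C / ((d:ℝ) - 1) with hD
  have hD0 : 0 ≤ D := div_nonneg hC0 (by linarith)
  have htail : ∀ n k z, dist (F n z) (F (n+k) z) ≤ D * r ^ n - D * r ^ (n+k) := by
    intro n k z
    induction k with
    | zero => simp
    | succ k ih =>
      have h1 := hstep (n+k) z
      have h2 : dist (F n z) (F (n+(k+1)) z)
          ≤ dist (F n z) (F (n+k) z) + dist (F (n+k) z) (F ((n+k)+1) z) := dist_triangle _ _ _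
      have h3 : C * r ^ ((n+k)+1) = D * r^(n+k) - D * r^((n+k)+1) := by
        have hd1ne : (d:ℝ) - 1 ≠ 0 := ne_of_gt (by linarith)
        have hDr : D * (1 - r) = C * r := by
          rw [hD, hr]; field_simp
        calc C * r^((n+k)+1) = (C * r) * r^(n+k) := by rw [pow_succ]; ring
          _ = (D * (1-r)) * r^(n+k) := by rw [hDr]
          _ = D * r^(n+k) - D * r^((n+k)+1) := by rw [pow_succ]; ring
      have h4 : n + (k+1) = (n+k)+1 := rfl
      rw [h4]
      rw [h4] at h2
      rw [h3] at h1
      linarith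
  have hmono : ∀ n m z, n ≤ m → dist (F n z) (F m z) ≤ D * r ^ n := by
    intro n m z h
    obtain ⟨k, rfl⟩ := Nat.exists_eq_add_of_le h
    have := htail n k z
    have h2 : 0 ≤ D * r ^ (n+k) := mul_nonneg hD0 (pow_nonneg hr0.le _)
    linarith
  have hcauchy : ∀ z, CauchySeq (fun n => F n z) := by
    intro z
    apply cauchySeq_of_le_geometric r (C * r) hr1
    intro n
    calc dist (F n z) (F (n+1) z) ≤ C * r^(n+1) := hstep n z
      _ = (C*r) * r^n := by ring
  choose g hg using fun z => cauchySeq_tendsto_of_complete (hcauchy z)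
  have hlim : ∀ n z, dist (F n z) (g z) ≤ D * r ^ n := by
    intro n z
    have h1 : Tendsto (fun m => dist (F n z) (F m z)) atTop (nhds (dist (F n z) (g z))) :=
      tendsto_const_nhds.dist (hg z)
    apply le_of_tendsto h1
    filter_upwards [eventually_ge_atTop n] with m hm
    exact hmono n m z hm
  have hUC : UniformCauchySeqOn F atTop Set.univ := by
    rw [Metric.uniformCauchySeqOn_iff]
    intro ε hε
    have ht : Tendsto (fun n : ℕ => D * r ^ n) atTop (nhds 0) := by
      simpa using (tendsto_pow_atTop_nhds_zero_of_lt_one hr0.le hr1).const_mul D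
    obtain ⟨N, hN⟩ := (Metric.tendsto_atTop.mp ht) (ε/2) (by linarith)
    refine ⟨N, fun m hm n hn x _ => ?_⟩
    have h1 := hmono N m x hm
    have h2 := hmono N n x hn
    have h3 := hN N le_rfl
    rw [Real.dist_eq, sub_zero] at h3
    have h4 : D * r^N < ε/2 := lt_of_le_of_lt (le_abs_self _) h3
    calc dist (F m x) (F n x) ≤ dist (F N x) (F m x) + dist (F N x) (F n x) :=
          dist_triangle_left _ _ _
      _ ≤ D*r^N + D*r^N := add_le_add h1 h2
      _ < ε := by linarith
  have hTU : TendstoUniformly F g atTop := by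
    rw [← tendstoUniformlyOn_univ]
    exact hUC.tendstoUniformlyOn_of_tendsto (fun x _ => hg x)
  refine ⟨g, hTU.tendstoLocallyUniformly, ?_, ?_, ?_, ?_⟩
  · -- continuity
    apply hTU.continuous
    exact Filter.Frequently.of_forall fun n => (phiGF_cont.comp (polyIter f n).continuous).div_const _
  · -- nonneg
    intro z
    apply ge_of_tendsto (hg z)
    filter_upwards with n
    exact div_nonneg (phiGF_nonneg _) (pow_nonneg hdpos.le n)
  · -- functional equation
    intro z
    have h1 : ∀ n, F n (f.eval z) = (d:ℝ) * F (n+1) z := by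
      intro n
      have e1 : (polyIter f n).eval (f.eval z) = (polyIter f (n+1)).eval z := by
        rw [hitc, hit]
      rw [hFphi, hFphi, e1, pow_succ]
      field_simp
    have h2 : Tendsto (fun n => F n (f.eval z)) atTop (nhds (g (f.eval z))) := hg _
    have h3 : Tendsto (fun n => (d:ℝ) * F (n+1) z) atTop (nhds ((d:ℝ) * g z)) :=
      ((hg z).comp (tendsto_add_atTop_nat 1)).const_mul (d:ℝ)
    have h4 : (fun n => F n (f.eval z)) = fun n => (d:ℝ) * F (n+1) z := funext h1
    rw [h4] at h2
    exact tendsto_nhds_unique h2 h3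
  · -- zero set
    ext z
    simp only [Set.mem_setOf_eq]
    constructor
    · intro h0
      refine ⟨Real.exp D, fun n => ?_⟩
      have h1 := hlim n z
      rw [h0, Real.dist_eq, sub_zero] at h1
      have h1' : F n z ≤ D * r^n := (le_abs_self _).trans h1
      have hpow : (0:ℝ) < (d:ℝ)^n := pow_pos hdpos n
      have h3 : F n z * (d:ℝ)^n ≤ D * r^n * (d:ℝ)^n :=
        mul_le_mul_of_nonneg_right h1' hpow.le
      have h4 : F n z * (d:ℝ)^n = phiGF ((polyIter f n).eval z) := by
        rw [hFphi]; field_simp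
      have h5 : D * r^n * (d:ℝ)^n = D := by
        rw [hr, div_pow, one_pow]
        field_simp
      rw [h4, h5] at h3
      calc ‖(polyIter f n).eval z‖
          ≤ max 1 (‖(polyIter f n).eval z‖) := le_max_right _ _
        _ = Real.exp (phiGF ((polyIter f n).eval z)) := by
            unfold phiGF; rw [Real.exp_log (by positivity)]
        _ ≤ Real.exp D := Real.exp_le_exp.mpr h3
    · rintro ⟨M, hM⟩
      set L : ℝ := Real.log (max 1 M) with hL
      have hb : ∀ n, F n z ≤ L * r ^ n := by
        intro n
        have h1 : phiGF ((polyIter f n).eval z) ≤ L := by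
          apply Real.log_le_log (by positivity)
          exact max_le (le_max_left _ _) ((hM n).trans (le_max_right _ _))
        have h2 : L * r ^ n = L / (d:ℝ)^n := by
          rw [hr, div_pow, one_pow, mul_one_div]
        rw [hFphi, h2]
        gcongr
      have h2 : Tendsto (fun n : ℕ => L * r ^ n) atTop (nhds 0) := by
        simpa using (tendsto_pow_atTop_nhds_zero_of_lt_one hr0.le hr1).const_mul L
      have h3 : Tendsto (fun n => F n z) atTop (nhds 0) :=
        squeeze_zero (fun n => div_nonneg (phiGF_nonneg _) (pow_nonneg hdpos.le n)) hb h2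
      exact tendsto_nhds_unique (hg z) h3
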